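/- Let τ > 0, let s₀ = σ₀ + iθ₀ with σ₀, θ₀ ∈ ℝ and θ₀ ≠ 0, and let a₁, a₀, α₁, α₀ ∈ ℝ. Then Δ(s₀) = 0 and Δ'(s₀) = 0 hold simultaneously if and only if, setting D = τ²θ₀² − sin²(τθ₀), one has a₁ = −2σ₀ − 2θ₀(τθ₀ − sin(τθ₀)cos(τθ₀))/D, a₀ = σ₀² + 2σ₀θ₀(τθ₀ − sin(τθ₀)cos(τθ₀))/D + θ₀²(τ²θ₀² + sin²(τθ₀))/D, α₁ = 2θ₀e^{σ₀τ}(τθ₀cos(τθ₀) − sin(τθ₀))/D, and α₀ = 2θ₀e^{σ₀τ}(σ₀(sin(τθ₀) − τθ₀cos(τθ₀)) − τθ₀²sin(τθ₀))/D. -/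

import Mathlib

open Complex

lemma ofReal_add_ofReal_mul_I_eq_zero (x y : ℝ) :
    (x : ℂ) + (y : ℂ) * Complex.I = 0 ↔ x = 0 ∧ y = 0 := by
  simp [Complex.ext_iff]

lemma sin_sq_lt_sq (x : ℝ) (hx : x ≠ 0) : Real.sin x ^ 2 < x ^ 2 := by
  rcases lt_or_gt_of_ne hx with h | h
  · have hx' : (0:ℝ) < -x := by linarith
    have : Real.sin (-x) ^ 2 < (-x) ^ 2 := by
      rcases le_or_gt (-x) 1 with h1 | h1
      · have hπ : -x < Real.pi := by linarith [Real.pi_gt_three]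
        have hs := Real.sin_pos_of_pos_of_lt_pi hx' hπ
        exact sq_lt_sq' (by linarith) (Real.sin_lt hx')
      · exact sq_lt_sq' (by linarith [Real.neg_one_le_sin (-x)]) (Real.sin_lt hx')
    simpa [Real.sin_neg] using this
  · rcases le_or_gt x 1 with h1 | h1
    · have hπ : x < Real.pi := by linarith [Real.pi_gt_three]
      have hs := Real.sin_pos_of_pos_of_lt_pi h hπ
      exact sq_lt_sq' (by linarith) (Real.sin_lt h)
    · exact sq_lt_sq' (by linarith [Real.neg_one_le_sin x]) (Real.sin_lt h)

/-- For s₀ = σ₀ + iθ₀ with θ₀ ≠ 0, Δ(s₀) = 0 and Δ'(s₀) = 0 hold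
simultaneously if and only if the coefficients are given by the stated formulas. -/
theorem double_root_conditions_iff
    (τ σ₀ θ₀ a₁ a₀ α₁ α₀ D : ℝ) (hτ : 0 < τ) (hθ₀ : θ₀ ≠ 0)
    (s₀ : ℂ) (hs₀ : s₀ = σ₀ + θ₀ * Complex.I)
    (hD : D = τ ^ 2 * θ₀ ^ 2 - Real.sin (τ * θ₀) ^ 2)
    (Δ : ℂ → ℂ)
    (hΔ : ∀ s : ℂ, Δ s = s ^ 2 + a₁ * s + a₀ + Complex.exp (-s * τ) * (α₁ * s + α₀)) :
    (Δ s₀ = 0 ∧ deriv Δ s₀ = 0)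
    ↔ (a₁ = -2 * σ₀ - 2 * θ₀ * (τ * θ₀ - Real.sin (τ * θ₀) * Real.cos (τ * θ₀)) / D ∧
       a₀ = σ₀ ^ 2 + 2 * σ₀ * θ₀ * (τ * θ₀ - Real.sin (τ * θ₀) * Real.cos (τ * θ₀)) / D
            + θ₀ ^ 2 * (τ ^ 2 * θ₀ ^ 2 + Real.sin (τ * θ₀) ^ 2) / D ∧
       α₁ = 2 * θ₀ * Real.exp (σ₀ * τ) * (τ * θ₀ * Real.cos (τ * θ₀) - Real.sin (τ * θ₀)) / D ∧
       α₀ = 2 * θ₀ * Real.exp (σ₀ * τ) *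
              (σ₀ * (Real.sin (τ * θ₀) - τ * θ₀ * Real.cos (τ * θ₀))
                - τ * θ₀ ^ 2 * Real.sin (τ * θ₀)) / D) := by
  set ss := Real.sin (τ * θ₀) with hss
  set cc := Real.cos (τ * θ₀) with hcc
  set F := Real.exp (σ₀ * τ) with hFdef
  set E := Real.exp (-(σ₀ * τ)) with hEdef
  have pyth : ss ^ 2 + cc ^ 2 = 1 := Real.sin_sq_add_cos_sq (τ * θ₀)
  have hEF : E * F = 1 := by rw [hEdef, hFdef, ← Real.exp_add]; simp
  have hx : τ * θ₀ ≠ 0 := mul_ne_zero (ne_of_gt hτ) hθ₀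
  have hDpos : 0 < D := by
    have := sin_sq_lt_sq (τ * θ₀) hx
    rw [hD]; rw [hss]; nlinarith
  have hD0 : D ≠ 0 := ne_of_gt hDpos
  have hDθ : D * θ₀ ≠ 0 := mul_ne_zero hD0 hθ₀
  -- exponential value
  have hexp : Complex.exp (-s₀ * τ) = (E : ℂ) * (cc - ss * Complex.I) := by
    rw [hs₀]
    have h1 : (-(↑σ₀ + ↑θ₀ * Complex.I) * (τ : ℂ)) =
        ↑(-(σ₀ * τ)) + ↑(-(τ * θ₀)) * Complex.I := by push_cast; ring
    rw [h1, Complex.exp_add, Complex.exp_mul_I]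
    rw [← Complex.ofReal_exp, ← Complex.ofReal_cos, ← Complex.ofReal_sin,
        Real.cos_neg, Real.sin_neg, hEdef, hss, hcc]
    push_cast; ring
  -- value of Δ at s₀
  have hΔval : Δ s₀ =
      ↑(σ₀ ^ 2 - θ₀ ^ 2 + a₁ * σ₀ + a₀ + E * (cc * (α₁ * σ₀ + α₀) + ss * (α₁ * θ₀)))
      + ↑(2 * σ₀ * θ₀ + a₁ * θ₀ + E * (cc * (α₁ * θ₀) - ss * (α₁ * σ₀ + α₀))) * Complex.I := by
    rw [hΔ s₀, hexp, hs₀]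
    apply Complex.ext <;> simp [pow_two] <;> ring
  -- derivative of Δ at s₀
  have hfun : Δ = fun s : ℂ => s ^ 2 + a₁ * s + a₀ + Complex.exp (-s * τ) * (α₁ * s + α₀) :=
    funext hΔ
  have hd : deriv Δ s₀ = 2 * s₀ + a₁ + Complex.exp (-s₀ * τ) * (α₁ - τ * (α₁ * s₀ + α₀)) := by
    have H : HasDerivAt (fun s : ℂ => s ^ 2 + a₁ * s + a₀ + Complex.exp (-s * τ) * (α₁ * s + α₀))
        (2 * s₀ + a₁ + Complex.exp (-s₀ * τ) * (α₁ - τ * (α₁ * s₀ + α₀))) s₀ := by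
      have h1 := hasDerivAt_pow 2 s₀
      have h2 := (hasDerivAt_id s₀).const_mul (a₁ : ℂ)
      have h3 : HasDerivAt (fun s : ℂ => Complex.exp (-s * τ)) (Complex.exp (-s₀ * τ) * (-τ)) s₀ := by
        simpa using ((hasDerivAt_id s₀).neg.mul_const (τ : ℂ)).cexp
      have h4 : HasDerivAt (fun s : ℂ => (α₁ : ℂ) * s + α₀) α₁ s₀ := by
        simpa using ((hasDerivAt_id s₀).const_mul (α₁ : ℂ)).add_const (α₀ : ℂ)
      have h5 := ((h1.add h2).add_const (a₀ : ℂ)).add (h3.mul h4)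
      refine h5.congr_deriv ?_
      push_cast; ring
    rw [hfun]
    exact H.deriv
  have hdval : deriv Δ s₀ =
      ↑(2 * σ₀ + a₁ + E * (cc * (α₁ - τ * (α₁ * σ₀ + α₀)) - ss * (τ * (α₁ * θ₀))))
      + ↑(2 * θ₀ + E * (-(cc * (τ * (α₁ * θ₀))) - ss * (α₁ - τ * (α₁ * σ₀ + α₀)))) * Complex.I := by
    rw [hd, hexp, hs₀]
    push_cast
    apply Complex.ext <;> simp <;> ring
  have hiff1 : Δ s₀ = 0 ↔
      (σ₀ ^ 2 - θ₀ ^ 2 + a₁ * σ₀ + a₀ + E * (cc * (α₁ * σ₀ + α₀) + ss * (α₁ * θ₀)) = 0 ∧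
       2 * σ₀ * θ₀ + a₁ * θ₀ + E * (cc * (α₁ * θ₀) - ss * (α₁ * σ₀ + α₀)) = 0) := by
    rw [hΔval, ofReal_add_ofReal_mul_I_eq_zero]
  have hiff2 : deriv Δ s₀ = 0 ↔
      (2 * σ₀ + a₁ + E * (cc * (α₁ - τ * (α₁ * σ₀ + α₀)) - ss * (τ * (α₁ * θ₀))) = 0 ∧
       2 * θ₀ + E * (-(cc * (τ * (α₁ * θ₀))) - ss * (α₁ - τ * (α₁ * σ₀ + α₀))) = 0) := by
    rw [hdval, ofReal_add_ofReal_mul_I_eq_zero]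
  rw [hiff1, hiff2]
  constructor
  · rintro ⟨⟨he1, he2⟩, he3, he4⟩
    have hQ : E * α₁ * θ₀ * D = 2 * θ₀ ^ 2 * (cc * τ * θ₀ - ss) := by
      linear_combination θ₀ * (ss - cc * τ * θ₀) * he4 - ss * τ * θ₀ ^ 2 * he3
        + ss * τ * θ₀ * he2 - θ₀ ^ 3 * τ ^ 2 * E * α₁ * pyth + θ₀ * E * α₁ * hD
    have hP : E * (α₁ * σ₀ + α₀) * D = -2 * ss * τ * θ₀ ^ 3 := by
      linear_combination (-(cc * τ * θ₀ + ss) * θ₀) * he3 + (cc * τ * θ₀ + ss) * he2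
        + ss * τ * θ₀ ^ 2 * he4 + (-(θ₀ ^ 2 * τ ^ 2 * E * α₀) - σ₀ * θ₀ ^ 2 * τ ^ 2 * E * α₁) * pyth + (E * α₀ + σ₀ * E * α₁) * hD
    have Ka1 : a₁ * D * θ₀ = -2 * σ₀ * D * θ₀ - 2 * θ₀ ^ 2 * (τ * θ₀ - ss * cc) := by
      linear_combination D * θ₀ * he3 - (cc - ss * τ * θ₀) * hQ + cc * τ * θ₀ * hP
        - 2 * θ₀ ^ 3 * τ * pyth
    have Ka0 : a₀ * D * θ₀ = σ₀ ^ 2 * D * θ₀ + 2 * σ₀ * θ₀ ^ 2 * (τ * θ₀ - ss * cc)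
        + θ₀ ^ 3 * (τ ^ 2 * θ₀ ^ 2 + ss ^ 2) := by
      linear_combination D * θ₀ * he1 - σ₀ * Ka1 - cc * θ₀ * hP - ss * θ₀ * hQ + θ₀ ^ 3 * hD
    have Kb1 : α₁ * D * θ₀ = 2 * θ₀ ^ 2 * F * (τ * θ₀ * cc - ss) := by
      linear_combination F * hQ + (θ₀ * ss ^ 2 * α₁ - θ₀ ^ 3 * τ ^ 2 * α₁) * hEF + (θ₀ * α₁ - θ₀ * E * F * α₁) * hD
    have Kb0 : α₀ * D * θ₀ = 2 * θ₀ ^ 2 * F * (σ₀ * (ss - τ * θ₀ * cc) - τ * θ₀ ^ 2 * ss) := by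
      linear_combination F * θ₀ * hP - σ₀ * Kb1 + (θ₀ * ss ^ 2 * α₀ - θ₀ ^ 3 * τ ^ 2 * α₀
        + σ₀ * θ₀ * ss ^ 2 * α₁ - σ₀ * θ₀ ^ 3 * τ ^ 2 * α₁) * hEF
        + (θ₀ * α₀ - θ₀ * E * F * α₀ + σ₀ * θ₀ * α₁ - σ₀ * θ₀ * E * F * α₁) * hD
    refine ⟨?_, ?_, ?_, ?_⟩
    · rw [show -2 * σ₀ - 2 * θ₀ * (τ * θ₀ - ss * cc) / D
        = (-2 * σ₀ * D * θ₀ - 2 * θ₀ ^ 2 * (τ * θ₀ - ss * cc)) / (D * θ₀) by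
          field_simp; try ring, eq_div_iff hDθ]
      linear_combination Ka1
    · rw [show σ₀ ^ 2 + 2 * σ₀ * θ₀ * (τ * θ₀ - ss * cc) / D + θ₀ ^ 2 * (τ ^ 2 * θ₀ ^ 2 + ss ^ 2) / D
        = (σ₀ ^ 2 * D * θ₀ + 2 * σ₀ * θ₀ ^ 2 * (τ * θ₀ - ss * cc)
            + θ₀ ^ 3 * (τ ^ 2 * θ₀ ^ 2 + ss ^ 2)) / (D * θ₀) by
          field_simp; try ring, eq_div_iff hDθ]
      linear_combination Ka0
    · rw [show 2 * θ₀ * F * (τ * θ₀ * cc - ss) / D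
        = (2 * θ₀ ^ 2 * F * (τ * θ₀ * cc - ss)) / (D * θ₀) by
          field_simp; try ring, eq_div_iff hDθ]
      linear_combination Kb1
    · rw [show 2 * θ₀ * F * (σ₀ * (ss - τ * θ₀ * cc) - τ * θ₀ ^ 2 * ss) / D
        = (2 * θ₀ ^ 2 * F * (σ₀ * (ss - τ * θ₀ * cc) - τ * θ₀ ^ 2 * ss)) / (D * θ₀) by
          field_simp; try ring, eq_div_iff hDθ]
      linear_combination Kb0
  · rintro ⟨h1, h2, h3, h4⟩
    have Ha1 : a₁ * D = -2 * σ₀ * D - 2 * θ₀ * (τ * θ₀ - ss * cc) := by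
      rw [h1]; field_simp; try ring
    have Ha0 : a₀ * D = σ₀ ^ 2 * D + 2 * σ₀ * θ₀ * (τ * θ₀ - ss * cc)
        + θ₀ ^ 2 * (τ ^ 2 * θ₀ ^ 2 + ss ^ 2) := by
      rw [h2]; field_simp; try ring
    have Hb1 : α₁ * D = 2 * θ₀ * F * (τ * θ₀ * cc - ss) := by
      rw [h3]; field_simp
    have Hb0 : α₀ * D = 2 * θ₀ * F * (σ₀ * (ss - τ * θ₀ * cc) - τ * θ₀ ^ 2 * ss) := by
      rw [h4]; field_simp
    have ke1 : (σ₀ ^ 2 - θ₀ ^ 2 + a₁ * σ₀ + a₀ + E * (cc * (α₁ * σ₀ + α₀) + ss * (α₁ * θ₀))) * D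
        = 0 := by
      linear_combination σ₀ * Ha1 + Ha0 + E * cc * σ₀ * Hb1 + E * cc * Hb0 + E * ss * θ₀ * Hb1
        - 2 * θ₀ ^ 2 * ss ^ 2 * hEF - θ₀ ^ 2 * hD
    have ke2 : (2 * σ₀ * θ₀ + a₁ * θ₀ + E * (cc * (α₁ * θ₀) - ss * (α₁ * σ₀ + α₀))) * D = 0 := by
      linear_combination θ₀ * Ha1 + E * cc * θ₀ * Hb1 - E * ss * (σ₀ * Hb1 + Hb0)
        + 2 * θ₀ ^ 3 * τ * E * F * pyth + (-(2 * θ₀ ^ 2 * cc * ss) + 2 * θ₀ ^ 3 * τ) * hEF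
    have ke3 : (2 * σ₀ + a₁ + E * (cc * (α₁ - τ * (α₁ * σ₀ + α₀)) - ss * (τ * (α₁ * θ₀)))) * D
        = 0 := by
      linear_combination Ha1 + E * cc * Hb1 - E * cc * τ * (σ₀ * Hb1 + Hb0) - E * ss * τ * θ₀ * Hb1
        + 2 * θ₀ ^ 2 * τ * E * F * pyth + (-(2 * θ₀ * cc * ss) + 2 * θ₀ ^ 2 * τ) * hEF
    have ke4 : (2 * θ₀ + E * (-(cc * (τ * (α₁ * θ₀))) - ss * (α₁ - τ * (α₁ * σ₀ + α₀)))) * D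
        = 0 := by
      linear_combination -(E * cc * τ * θ₀) * Hb1 - E * ss * Hb1 + E * ss * τ * (σ₀ * Hb1 + Hb0)
        - 2 * θ₀ ^ 3 * τ ^ 2 * E * F * pyth + (2 * θ₀ * ss ^ 2 - 2 * θ₀ ^ 3 * τ ^ 2) * hEF + 2 * θ₀ * hD
    exact ⟨⟨(mul_eq_zero.mp ke1).resolve_right hD0, (mul_eq_zero.mp ke2).resolve_right hD0⟩,
      (mul_eq_zero.mp ke3).resolve_right hD0, (mul_eq_zero.mp ke4).resolve_right hD0⟩
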